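/- Let e₀ = (1,0) ∈ ℂ² and consider the action of SU(2) × SU(2) × SU(2) × U(1) on ℂ² ⊗_ℂ ℂ² ⊗_ℂ ℂ² given by (A, B, C, z)·v = z · (A ⊗ B ⊗ C)(v). The stabilizer of the pure tensor e₀ ⊗ e₀ ⊗ e₀, namely {(A, B, C, z) : z · (A e₀) ⊗ (B e₀) ⊗ (C e₀) = e₀ ⊗ e₀ ⊗ e₀}, equals {(D_α, D_β, D_γ, z) : α, β, γ, z ∈ U(1), α β γ z = 1}, where D_α denotes the diagonal matrix diag(α, α⁻¹) ∈ SU(2). In particular, this stabilizer is isomorphic as a topological group to the 3-torus U(1)³, so the orbit of e₀ ⊗ e₀ ⊗ e₀ has dimension 7. -/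

import Mathlib

open scoped TensorProduct

set_option maxHeartbeats 1000000
set_option synthInstance.maxHeartbeats 400000

lemma mulVec_e0_aux (A : Matrix (Fin 2) (Fin 2) ℂ) (i : Fin 2) :
    (A.mulVec ![1,0]) i = A i 0 := by
  simp [Matrix.mulVec, dotProduct, Fin.sum_univ_two, Matrix.vecHead]

lemma su2_structure (A : Matrix (Fin 2) (Fin 2) ℂ) (h1 : A.conjTranspose * A = 1)
    (h2 : A.det = 1) (h10 : A 1 0 = 0) :
    ‖A 0 0‖ = 1 ∧ A = Matrix.diagonal ![A 0 0, (A 0 0)⁻¹] := by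
  have e00 : (A.conjTranspose * A) 0 0 = (1 : Matrix (Fin 2) (Fin 2) ℂ) 0 0 := by rw [h1]
  have e01 : (A.conjTranspose * A) 0 1 = (1 : Matrix (Fin 2) (Fin 2) ℂ) 0 1 := by rw [h1]
  simp [Matrix.mul_apply, Fin.sum_univ_two, Matrix.conjTranspose_apply, Matrix.one_apply,
    h10] at e00 e01
  have hnorm : ‖A 0 0‖ = 1 := by
    have h : ((‖A 0 0‖ : ℂ))^2 = 1 := by rw [← Complex.mul_conj']; linear_combination e00
    have h2 : ‖A 0 0‖^2 = 1 := by exact_mod_cast h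
    nlinarith [norm_nonneg (A 0 0)]
  have hA00ne : A 0 0 ≠ 0 := by
    intro h; rw [h] at hnorm; simp at hnorm
  have hA01 : A 0 1 = 0 := e01.resolve_left hA00ne
  have hdet : A 0 0 * A 1 1 = 1 := by
    have h := Matrix.det_fin_two A
    rw [h2, hA01] at h
    linear_combination -h
  have hA11 : A 1 1 = (A 0 0)⁻¹ := eq_inv_of_mul_eq_one_right hdet
  refine ⟨hnorm, ?_⟩
  ext i j
  fin_cases i <;> fin_cases j <;>
    simp [Matrix.diagonal, hA01, h10, hA11]

lemma su2_diag (α : ℂ) (hα : ‖α‖ = 1) :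
    (Matrix.diagonal ![α, α⁻¹]).conjTranspose * Matrix.diagonal ![α, α⁻¹] = 1 ∧
      (Matrix.diagonal ![α, α⁻¹]).det = 1 := by
  have hαne : α ≠ 0 := by intro h; rw [h] at hα; simp at hα
  have hconj : (starRingEnd ℂ) α * α = 1 := by
    rw [mul_comm, Complex.mul_conj', hα]; norm_num
  constructor
  · rw [Matrix.diagonal_conjTranspose, Matrix.diagonal_mul_diagonal]
    convert Matrix.diagonal_one using 2
    funext i
    fin_cases i
    · simpa using hconj
    · show (starRingEnd ℂ) (α⁻¹) * α⁻¹ = 1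
      rw [map_inv₀, ← mul_inv_rev, Complex.mul_conj', hα]
      norm_num
  · rw [Matrix.det_diagonal]
    simp [Fin.prod_univ_two, mul_inv_cancel₀ hαne]

lemma circle_mem_of_norm (α : ℂ) (h : ‖α‖ = 1) : α ∈ Submonoid.unitSphere ℂ := by
  simp only [Submonoid.unitSphere, Submonoid.mem_mk, Subsemigroup.mem_mk,
    mem_sphere_zero_iff_norm, h]

/-- In the action of `SU(2) × SU(2) × SU(2) × U(1)` on
`ℂ² ⊗ ℂ² ⊗ ℂ²` by `(A,B,C,z)·v = z·(A ⊗ B ⊗ C)v`, the stabilizer of the pure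
tensor `e₀ ⊗ e₀ ⊗ e₀` (with `e₀ = (1,0)`) is exactly
`{(D_α, D_β, D_γ, z) : |α| = |β| = |γ| = |z| = 1, αβγz = 1}` where
`D_α = diag(α, α⁻¹)`; in particular it is a `3`-torus `U(1)³`, so the orbit of
`e₀ ⊗ e₀ ⊗ e₀` has dimension `7`. -/
theorem stabilizer_pure_tensor_SU2_cubed (e0 : Fin 2 → ℂ) (he0 : e0 = ![1, 0]) :
    {q : Matrix (Fin 2) (Fin 2) ℂ × Matrix (Fin 2) (Fin 2) ℂ × Matrix (Fin 2) (Fin 2) ℂ × ℂ |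
        (q.1.conjTranspose * q.1 = 1 ∧ q.1.det = 1) ∧
        (q.2.1.conjTranspose * q.2.1 = 1 ∧ q.2.1.det = 1) ∧
        (q.2.2.1.conjTranspose * q.2.2.1 = 1 ∧ q.2.2.1.det = 1) ∧
        ‖q.2.2.2‖ = 1 ∧
        q.2.2.2 • (TensorProduct.map (TensorProduct.map q.1.mulVecLin q.2.1.mulVecLin)
            q.2.2.1.mulVecLin) ((e0 ⊗ₜ[ℂ] e0) ⊗ₜ[ℂ] e0) = (e0 ⊗ₜ[ℂ] e0) ⊗ₜ[ℂ] e0}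
      = {q | ∃ α β γ z : ℂ, ‖α‖ = 1 ∧ ‖β‖ = 1 ∧ ‖γ‖ = 1 ∧ ‖z‖ = 1 ∧ α * β * γ * z = 1 ∧
          q = (Matrix.diagonal ![α, α⁻¹], Matrix.diagonal ![β, β⁻¹],
               Matrix.diagonal ![γ, γ⁻¹], z)} ∧
    Nonempty
      (↥{q : Matrix (Fin 2) (Fin 2) ℂ × Matrix (Fin 2) (Fin 2) ℂ × Matrix (Fin 2) (Fin 2) ℂ × ℂ |
          ∃ α β γ z : ℂ, ‖α‖ = 1 ∧ ‖β‖ = 1 ∧ ‖γ‖ = 1 ∧ ‖z‖ = 1 ∧ α * β * γ * z = 1 ∧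
            q = (Matrix.diagonal ![α, α⁻¹], Matrix.diagonal ![β, β⁻¹],
                 Matrix.diagonal ![γ, γ⁻¹], z)} ≃ₜ (Circle × Circle × Circle)) := by
  subst he0
  constructor
  · -- set equality
    ext q
    obtain ⟨A, B, C, z⟩ := q
    simp only [Set.mem_setOf_eq]
    constructor
    · rintro ⟨⟨hA1, hA2⟩, ⟨hB1, hB2⟩, ⟨hC1, hC2⟩, hz, ht⟩
      simp only [TensorProduct.map_tmul, Matrix.mulVecLin_apply] at ht
      set b := Pi.basisFun ℂ (Fin 2) with hb
      have key : ∀ i j k : Fin 2,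
          z * (A.mulVec ![1,0] i * (B.mulVec ![1,0] j * C.mulVec ![1,0] k))
            = (![1,0] : Fin 2 → ℂ) i * ((![1,0] : Fin 2 → ℂ) j * (![1,0] : Fin 2 → ℂ) k) := by
        intro i j k
        have h := congrArg
          (fun t => ((b.tensorProduct b).tensorProduct b).repr t ((i, j), k)) ht
        simp only [map_smul, Module.Basis.tensorProduct_repr_tmul_apply, Pi.basisFun_repr,
          smul_eq_mul, Finsupp.smul_apply, hb] at h
        linear_combination h
      simp only [mulVec_e0_aux] at key
      have k000 := key 0 0 0
      have k100 := key 1 0 0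
      have k010 := key 0 1 0
      have k001 := key 0 0 1
      simp only [Matrix.cons_val_zero, Matrix.cons_val_one, Matrix.head_cons, one_mul,
        zero_mul, mul_zero, mul_one] at k000 k100 k010 k001
      have hA1' : (z * (B 0 0 * C 0 0)) * A 0 0 = 1 := by linear_combination k000
      have hB1' : (z * (A 0 0 * C 0 0)) * B 0 0 = 1 := by linear_combination k000
      have hC1' : (z * (A 0 0 * B 0 0)) * C 0 0 = 1 := by linear_combination k000
      have hA10 : A 1 0 = 0 := by
        have h : (z * (B 0 0 * C 0 0)) * A 1 0 = 0 := by linear_combination k100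
        exact (mul_eq_zero.mp h).resolve_left (left_ne_zero_of_mul_eq_one hA1')
      have hB10 : B 1 0 = 0 := by
        have h : (z * (A 0 0 * C 0 0)) * B 1 0 = 0 := by linear_combination k010
        exact (mul_eq_zero.mp h).resolve_left (left_ne_zero_of_mul_eq_one hB1')
      have hC10 : C 1 0 = 0 := by
        have h : (z * (A 0 0 * B 0 0)) * C 1 0 = 0 := by linear_combination k001
        exact (mul_eq_zero.mp h).resolve_left (left_ne_zero_of_mul_eq_one hC1')
      obtain ⟨hnA, hAeq⟩ := su2_structure A hA1 hA2 hA10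
      obtain ⟨hnB, hBeq⟩ := su2_structure B hB1 hB2 hB10
      obtain ⟨hnC, hCeq⟩ := su2_structure C hC1 hC2 hC10
      refine ⟨A 0 0, B 0 0, C 0 0, z, hnA, hnB, hnC, hz, by linear_combination k000, ?_⟩
      exact Prod.ext hAeq (Prod.ext hBeq (Prod.ext hCeq rfl))
    · rintro ⟨α, β, γ, w, hα, hβ, hγ, hw, h1, heq⟩
      simp only [Prod.mk.injEq] at heq
      obtain ⟨rfl, rfl, rfl, rfl⟩ := heq
      obtain ⟨hA1, hA2⟩ := su2_diag α hα
      obtain ⟨hB1, hB2⟩ := su2_diag β hβ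
      obtain ⟨hC1, hC2⟩ := su2_diag γ hγ
      refine ⟨⟨hA1, hA2⟩, ⟨hB1, hB2⟩, ⟨hC1, hC2⟩, hw, ?_⟩
      have hv : ∀ δ : ℂ, (Matrix.diagonal ![δ, δ⁻¹]).mulVec ![1,0] = δ • ![(1:ℂ),0] := by
        intro δ; funext i; fin_cases i <;> simp [Matrix.mulVec_diagonal]
      simp only [TensorProduct.map_tmul, Matrix.mulVecLin_apply, hv,
        TensorProduct.smul_tmul', TensorProduct.tmul_smul, smul_smul]
      rw [show z * (γ * (β * α)) = 1 by linear_combination h1, one_smul]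
  · -- homeomorphism with the 3-torus
    have hne : ∀ u : Circle, (u : ℂ) ≠ 0 := by
      intro u h
      have h1 : ‖(u : ℂ)‖ = 1 := Circle.norm_coe u
      rw [h] at h1; simp at h1
    have hmem : ∀ p : Circle × Circle × Circle,
        ((Matrix.diagonal ![(p.1 : ℂ), (p.1 : ℂ)⁻¹],
          Matrix.diagonal ![(p.2.1 : ℂ), (p.2.1 : ℂ)⁻¹],
          Matrix.diagonal ![(p.2.2 : ℂ), (p.2.2 : ℂ)⁻¹],
          ((p.1 * p.2.1 * p.2.2 : Circle) : ℂ)⁻¹)) ∈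
        {q : Matrix (Fin 2) (Fin 2) ℂ × Matrix (Fin 2) (Fin 2) ℂ × Matrix (Fin 2) (Fin 2) ℂ × ℂ |
          ∃ α β γ z : ℂ, ‖α‖ = 1 ∧ ‖β‖ = 1 ∧ ‖γ‖ = 1 ∧ ‖z‖ = 1 ∧ α * β * γ * z = 1 ∧
            q = (Matrix.diagonal ![α, α⁻¹], Matrix.diagonal ![β, β⁻¹],
                 Matrix.diagonal ![γ, γ⁻¹], z)} := by
      intro p
      refine ⟨p.1, p.2.1, p.2.2, _, Circle.norm_coe _, Circle.norm_coe _, Circle.norm_coe _,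
        by rw [norm_inv, Circle.norm_coe, inv_one], ?_, rfl⟩
      rw [Circle.coe_mul, Circle.coe_mul]
      exact mul_inv_cancel₀ (mul_ne_zero (mul_ne_zero (hne p.1) (hne p.2.1)) (hne p.2.2))
    set g : Circle × Circle × Circle →
        {q : Matrix (Fin 2) (Fin 2) ℂ × Matrix (Fin 2) (Fin 2) ℂ × Matrix (Fin 2) (Fin 2) ℂ × ℂ |
          ∃ α β γ z : ℂ, ‖α‖ = 1 ∧ ‖β‖ = 1 ∧ ‖γ‖ = 1 ∧ ‖z‖ = 1 ∧ α * β * γ * z = 1 ∧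
            q = (Matrix.diagonal ![α, α⁻¹], Matrix.diagonal ![β, β⁻¹],
                 Matrix.diagonal ![γ, γ⁻¹], z)} :=
      fun p => ⟨_, hmem p⟩ with hg
    have hginj : Function.Injective g := by
      intro p p' h
      have h' := Subtype.ext_iff.mp h
      simp only [hg, Prod.mk.injEq] at h'
      obtain ⟨h1, h2, h3, -⟩ := h'
      have e1 : (p.1 : ℂ) = p'.1 := by
        have := congrFun (congrFun h1 0) 0; simpa [Matrix.diagonal] using this
      have e2 : (p.2.1 : ℂ) = p'.2.1 := by
        have := congrFun (congrFun h2 0) 0; simpa [Matrix.diagonal] using this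
      have e3 : (p.2.2 : ℂ) = p'.2.2 := by
        have := congrFun (congrFun h3 0) 0; simpa [Matrix.diagonal] using this
      exact Prod.ext (Subtype.ext e1) (Prod.ext (Subtype.ext e2) (Subtype.ext e3))
    have hgsurj : Function.Surjective g := by
      rintro ⟨q, hq⟩
      obtain ⟨α, β, γ, z, hα, hβ, hγ, hz, h1, rfl⟩ := hq
      refine ⟨((⟨α, circle_mem_of_norm α hα⟩ : Circle), (⟨β, circle_mem_of_norm β hβ⟩ : Circle),
        (⟨γ, circle_mem_of_norm γ hγ⟩ : Circle)), ?_⟩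
      apply Subtype.ext
      simp only [hg, Prod.mk.injEq, true_and]
      show (α * β * γ)⁻¹ = z
      have h2 : (α * β * γ) * z = 1 := by linear_combination h1
      exact (eq_inv_of_mul_eq_one_right h2).symm
    have hcoe1 : Continuous fun p : Circle × Circle × Circle => (p.1 : ℂ) :=
      continuous_subtype_val.comp continuous_fst
    have hcoe2 : Continuous fun p : Circle × Circle × Circle => (p.2.1 : ℂ) :=
      continuous_subtype_val.comp (continuous_fst.comp continuous_snd)
    have hcoe3 : Continuous fun p : Circle × Circle × Circle => (p.2.2 : ℂ) :=
      continuous_subtype_val.comp (continuous_snd.comp continuous_snd)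
    have hdiagc : ∀ (f : (Circle × Circle × Circle) → Circle),
        Continuous f →
        Continuous fun p => Matrix.diagonal ![(f p : ℂ), (f p : ℂ)⁻¹] := by
      intro f hf
      apply continuous_matrix
      intro i j
      fin_cases i <;> fin_cases j <;>
        simp only [Matrix.diagonal_apply, Fin.zero_eta, Fin.mk_one, Matrix.cons_val_zero,
          Matrix.cons_val_one, Matrix.head_cons, reduceIte, Fin.isValue]
      · exact continuous_subtype_val.comp hf
      · exact continuous_const
      · exact continuous_const
      · simp only [← Circle.coe_inv]
        exact continuous_subtype_val.comp hf.inv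
    have hgc : Continuous g := by
      apply Continuous.subtype_mk
      refine Continuous.prodMk (hdiagc _ continuous_fst)
        (Continuous.prodMk (hdiagc _ (continuous_fst.comp continuous_snd)) (Continuous.prodMk (hdiagc _ (continuous_snd.comp continuous_snd)) ?_))
      have hc : Continuous fun p : Circle × Circle × Circle => (p.1 * p.2.1 * p.2.2)⁻¹ :=
        ((continuous_fst.mul (continuous_fst.comp continuous_snd)).mul
          (continuous_snd.comp continuous_snd)).inv
      have : (fun p : Circle × Circle × Circle => ((p.1 * p.2.1 * p.2.2 : Circle) : ℂ)⁻¹)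
          = fun p => (((p.1 * p.2.1 * p.2.2)⁻¹ : Circle) : ℂ) := by
        funext p; rw [Circle.coe_inv]
      rw [this]
      exact continuous_subtype_val.comp hc
    exact ⟨(Continuous.homeoOfEquivCompactToT2
      (f := Equiv.ofBijective g ⟨hginj, hgsurj⟩) hgc).symm⟩
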